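/- Let n ≥ 3. Suppose a regular n-gon has center c₁, circumradius R₁ > 0, and the point M lies on its circumcircle, i.e. |M − c₁| = R₁. If another regular n-gon with center c₂ and circumradius R₂ > 0 has the same multiset of distances from M to its vertices, then R₂ = R₁ and |M − c₂| = R₂; i.e. when M lies on the circumcircle there is no non-congruent regular n-gon with the same distances. -/

import Mathlib

open Complex Real Finset

lemma geom_zero {n : ℕ} {z : ℂ} (hz : z ≠ 1) (hzn : z ^ n = 1) :
    ∑ k ∈ Finset.range n, z ^ k = 0 := by
  rw [geom_sum_eq hz, hzn]; simp

lemma polygon_sums (n : ℕ) (hn : 3 ≤ n) (c M : ℂ) (R θ : ℝ) :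
    (∑ k ∈ Finset.range n,
        (‖M - (c + R * Complex.exp (Complex.I * ((2 * π * k / n + θ : ℝ) : ℂ)))‖)^2)
      = n * (Complex.normSq (M - c) + R^2)
  ∧ (∑ k ∈ Finset.range n,
        (‖M - (c + R * Complex.exp (Complex.I * ((2 * π * k / n + θ : ℝ) : ℂ)))‖)^4)
      = n * (Complex.normSq (M - c) + R^2)^2 + 2 * n * R^2 * Complex.normSq (M - c) := by
  have hn0 : (n : ℂ) ≠ 0 := by exact_mod_cast (by omega : n ≠ 0)
  set ζ : ℂ := Complex.exp (2 * π * Complex.I / n) with hζdef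
  have hζ : IsPrimitiveRoot ζ n := Complex.isPrimitiveRoot_exp n (by omega)
  have hζn : ζ ^ n = 1 := hζ.pow_eq_one
  have hζ1 : ζ ≠ 1 := hζ.ne_one (by omega)
  have hζ2 : ζ ^ 2 ≠ 1 := by
    intro h
    have := (hζ.pow_eq_one_iff_dvd 2).mp h
    have := Nat.le_of_dvd (by norm_num) this
    omega
  set η : ℂ := (starRingEnd ℂ) ζ with hηdef
  have hηn : η ^ n = 1 := by rw [hηdef, ← map_pow, hζn, map_one]
  have hη1 : η ≠ 1 := by
    intro h
    apply hζ1
    have := congrArg (starRingEnd ℂ) h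
    simpa [hηdef] using this
  have hη2 : η ^ 2 ≠ 1 := by
    intro h
    apply hζ2
    have := congrArg (starRingEnd ℂ) h
    simpa [hηdef, ← map_pow] using this
  have hS1 : ∑ k ∈ Finset.range n, η ^ k = 0 := geom_zero hη1 hηn
  have hS2 : ∑ k ∈ Finset.range n, (η ^ 2) ^ k = 0 :=
    geom_zero hη2 (by rw [← pow_mul, mul_comm, pow_mul, hηn, one_pow])
  set e : ℂ := Complex.exp (Complex.I * θ) with hedef
  have hu : ∀ k : ℕ, Complex.exp (Complex.I * ((2 * π * k / n + θ : ℝ) : ℂ)) = e * ζ ^ k := by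
    intro k
    rw [hedef, hζdef, ← Complex.exp_nat_mul, ← Complex.exp_add]
    congr 1
    push_cast
    field_simp
    ring
  set w : ℂ := M - c with hwdef
  have habs1 : ∀ k : ℕ, Complex.normSq (e * ζ ^ k) = 1 := by
    intro k
    have h1 : ‖e‖ = 1 := by
      rw [hedef, Complex.norm_exp]
      simp [Complex.mul_re]
    have h2 : ‖ζ‖ = 1 := by
      rw [hζdef, Complex.norm_exp]
      simp [Complex.div_re, Complex.mul_re, Complex.normSq_apply]
    rw [← Complex.sq_norm]
    simp [map_mul, map_pow, h1, h2]
  -- t k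
  set t : ℕ → ℝ := fun k => (w * (starRingEnd ℂ) (e * ζ ^ k)).re with htdef
  have hz : ∀ k : ℕ, w * (starRingEnd ℂ) (e * ζ ^ k) = (w * (starRingEnd ℂ) e) * η ^ k := by
    intro k
    simp only [map_mul, map_pow]
    rw [hηdef]
    ring
  have hT1 : ∑ k ∈ Finset.range n, t k = 0 := by
    have : ∑ k ∈ Finset.range n, (w * (starRingEnd ℂ) (e * ζ ^ k)) = 0 := by
      simp_rw [hz, ← Finset.mul_sum, hS1, mul_zero]
    calc ∑ k ∈ Finset.range n, t k
        = (∑ k ∈ Finset.range n, (w * (starRingEnd ℂ) (e * ζ ^ k))).re := by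
          rw [Complex.re_sum]
      _ = 0 := by rw [this]; simp
  have hT2 : ∑ k ∈ Finset.range n, (t k)^2 = n * Complex.normSq w / 2 := by
    have hzsq : ∑ k ∈ Finset.range n, (w * (starRingEnd ℂ) (e * ζ ^ k))^2 = 0 := by
      have hsq : ∀ k ∈ Finset.range n, (w * (starRingEnd ℂ) (e * ζ ^ k))^2
          = (w * (starRingEnd ℂ) e)^2 * (η ^ 2) ^ k := by
        intro k _
        rw [hz k, mul_pow, ← pow_mul, mul_comm k 2, pow_mul]
      rw [Finset.sum_congr rfl hsq, ← Finset.mul_sum, hS2, mul_zero]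
    have key : ∀ z : ℂ, z.re^2 = ((z^2).re + Complex.normSq z)/2 := by
      intro z
      simp only [Complex.normSq_apply, pow_two, Complex.mul_re]
      ring
    have hper : ∀ k : ℕ, (t k)^2
        = (((w * (starRingEnd ℂ) (e * ζ ^ k))^2).re + Complex.normSq w) / 2 := by
      intro k
      have hns : Complex.normSq (w * (starRingEnd ℂ) (e * ζ ^ k)) = Complex.normSq w := by
        rw [Complex.normSq_mul, Complex.normSq_conj, habs1 k, mul_one]
      have := key (w * (starRingEnd ℂ) (e * ζ ^ k))
      rw [hns] at this
      exact this
    rw [Finset.sum_congr rfl (fun k _ => hper k)]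
    rw [← Finset.sum_div, Finset.sum_add_distrib, ← Complex.re_sum, hzsq, Finset.sum_const]
    simp [nsmul_eq_mul]
  -- squared distance
  set A : ℝ := Complex.normSq w + R^2 with hAdef
  have hd2 : ∀ k ∈ Finset.range n,
      (‖M - (c + R * Complex.exp (Complex.I * ((2 * π * k / n + θ : ℝ) : ℂ)))‖)^2
        = A - 2 * R * t k := by
    intro k _
    rw [hu k]
    have : M - (c + (R : ℂ) * (e * ζ ^ k)) = w - (R : ℂ) * (e * ζ ^ k) := by
      rw [hwdef]; ring
    rw [this, Complex.sq_norm, Complex.normSq_sub]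
    rw [Complex.normSq_mul, Complex.normSq_ofReal, habs1 k]
    have : (w * (starRingEnd ℂ) ((R : ℂ) * (e * ζ ^ k))).re = R * t k := by
      have h1 : w * (starRingEnd ℂ) ((R : ℂ) * (e * ζ ^ k))
          = (R : ℂ) * (w * (starRingEnd ℂ) (e * ζ ^ k)) := by
        rw [map_mul, Complex.conj_ofReal]; ring
      rw [h1, Complex.re_ofReal_mul]
    rw [this, hAdef]
    ring
  constructor
  · rw [Finset.sum_congr rfl hd2, Finset.sum_sub_distrib, Finset.sum_const, ← Finset.mul_sum,
      hT1, mul_zero, sub_zero, nsmul_eq_mul, Finset.card_range]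
  · have : ∀ k ∈ Finset.range n,
        (‖M - (c + R * Complex.exp (Complex.I * ((2 * π * k / n + θ : ℝ) : ℂ)))‖)^4
          = (A - 2 * R * t k)^2 := by
      intro k hk
      rw [show (4:ℕ) = 2*2 by norm_num, pow_mul, hd2 k hk]
    rw [Finset.sum_congr rfl this]
    have expand : ∀ k : ℕ, (A - 2 * R * t k)^2
        = A^2 - 4*A*R*(t k) + 4*R^2*(t k)^2 := by intro k; ring
    rw [Finset.sum_congr rfl (fun k _ => expand k)]
    rw [Finset.sum_add_distrib, Finset.sum_sub_distrib, Finset.sum_const, ← Finset.mul_sum,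
      ← Finset.mul_sum, hT1, hT2, nsmul_eq_mul, hAdef, Finset.card_range]
    ring

theorem on_circumcircle_no_noncongruent (n : ℕ) (hn : 3 ≤ n)
    (c₁ c₂ M : ℂ) (R₁ R₂ α β : ℝ) (hR₁ : 0 < R₁) (hR₂ : 0 < R₂)
    (hM : ‖M - c₁‖ = R₁)
    (hdist : (Finset.range n).val.map
        (fun k => ‖M - (c₂ + R₂ * Complex.exp (Complex.I * ((2 * π * k / n + β : ℝ) : ℂ)))‖)
      = (Finset.range n).val.map
          (fun k => ‖M - (c₁ + R₁ * Complex.exp (Complex.I * ((2 * π * k / n + α : ℝ) : ℂ)))‖)) :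
    R₂ = R₁ ∧ ‖M - c₂‖ = R₂ := by
  have hn0 : (n : ℝ) ≠ 0 := by
    exact_mod_cast (by omega : n ≠ 0)
  obtain ⟨P2a, P2b⟩ := polygon_sums n hn c₂ M R₂ β
  obtain ⟨P1a, P1b⟩ := polygon_sums n hn c₁ M R₁ α
  have h2 : ∑ k ∈ Finset.range n,
      (‖M - (c₂ + R₂ * Complex.exp (Complex.I * ((2 * π * k / n + β : ℝ) : ℂ)))‖)^2
      = ∑ k ∈ Finset.range n,
      (‖M - (c₁ + R₁ * Complex.exp (Complex.I * ((2 * π * k / n + α : ℝ) : ℂ)))‖)^2 := by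
    have h := congrArg (fun s : Multiset ℝ => (Multiset.map (fun x : ℝ => x^2) s).sum) hdist
    simpa [Multiset.bind_singleton, Multiset.map_map, Function.comp, Finset.sum_eq_multiset_sum, Finset.range_val] using h
  have h4 : ∑ k ∈ Finset.range n,
      (‖M - (c₂ + R₂ * Complex.exp (Complex.I * ((2 * π * k / n + β : ℝ) : ℂ)))‖)^4
      = ∑ k ∈ Finset.range n,
      (‖M - (c₁ + R₁ * Complex.exp (Complex.I * ((2 * π * k / n + α : ℝ) : ℂ)))‖)^4 := by
    have h := congrArg (fun s : Multiset ℝ => (Multiset.map (fun x : ℝ => x^4) s).sum) hdist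
    simpa [Multiset.bind_singleton, Multiset.map_map, Function.comp, Finset.sum_eq_multiset_sum, Finset.range_val] using h
  rw [P2a, P1a] at h2
  rw [P2b, P1b] at h4
  have ha₁ : Complex.normSq (M - c₁) = R₁^2 := by
    rw [← Complex.sq_norm, hM]
  have ha₂ : (0:ℝ) ≤ Complex.normSq (M - c₂) := Complex.normSq_nonneg _
  set a : ℝ := Complex.normSq (M - c₂) with hadef
  rw [ha₁] at h2 h4
  have e1 : a + R₂^2 = R₁^2 + R₁^2 := mul_left_cancel₀ hn0 (by linarith [h2])
  have e2 : (a + R₂^2)^2 + 2 * R₂^2 * a = (R₁^2 + R₁^2)^2 + 2 * R₁^2 * R₁^2 := by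
    have h4' : (n:ℝ) * ((a + R₂^2)^2 + 2 * R₂^2 * a)
        = (n:ℝ) * ((R₁^2 + R₁^2)^2 + 2 * R₁^2 * R₁^2) := by ring_nf; ring_nf at h4; linarith [h4]
    exact mul_left_cancel₀ hn0 h4'
  rw [e1] at e2
  have e3 : R₂^2 * a = R₁^2 * R₁^2 := by linarith [e2]
  have e1sq : (a + R₂^2)^2 = (R₁^2 + R₁^2)^2 := by rw [e1]
  have e4 : a = R₂^2 := by
    have hz : (a - R₂^2)^2 = 0 := by nlinarith [e1sq, e3]
    have := pow_eq_zero_iff (n := 2) (by norm_num) |>.mp hz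
    linarith
  have e5 : R₂^2 = R₁^2 := by linarith [e1, e4]
  have hR : R₂ = R₁ := by
    have := congrArg Real.sqrt e5
    rwa [Real.sqrt_sq hR₂.le, Real.sqrt_sq hR₁.le] at this
  refine ⟨hR, ?_⟩
  have habs : ‖M - c₂‖ ^ 2 = R₂^2 := by
    rw [Complex.sq_norm, ← hadef, e4]
  have := congrArg Real.sqrt habs
  rwa [Real.sqrt_sq (norm_nonneg _), Real.sqrt_sq hR₂.le] at this
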